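/- The Knuth–Bendix normal form in the Vershik group V_n is unique: if x_{i_1}^{μ_1} ⋯ x_{i_k}^{μ_k} = x_{i'_1}^{μ'_1} ⋯ x_{i'_{k'}}^{μ'_{k'}} holds in V_n, where both expressions have all exponents nonzero, both have total exponent sum Σ|μ_j| (respectively Σ|μ'_j|) equal to the length of the common element, and both index sequences satisfy conditions (i)–(iii), then k = k' and (i_j, μ_j) = (i'_j, μ'_j) for all j = 1, …, k. -/

import Mathlib

/-- Defining relations of the Vershik group `V n`: generators `x_i` and `x_j`
(0-indexed by `Fin n`) commute whenever `|i - j| ≥ 2`. -/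
def VershikRels (n : ℕ) : Set (FreeGroup (Fin n)) :=
  {r | ∃ i j : Fin n, 2 ≤ |(i : ℤ) - (j : ℤ)| ∧
      r = FreeGroup.of i * FreeGroup.of j * (FreeGroup.of i)⁻¹ * (FreeGroup.of j)⁻¹}

/-- The Vershik group of rank `n`. -/
abbrev Vershik (n : ℕ) : Type := PresentedGroup (VershikRels n)

/-- The generator `x_{i+1}` of the Vershik group (0-indexed by `Fin n`). -/
def xGen (n : ℕ) (i : Fin n) : Vershik n := PresentedGroup.of i

/-- A letter: a generator or the inverse of a generator. -/
def IsLetter (n : ℕ) (g : Vershik n) : Prop :=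
  ∃ i : Fin n, g = xGen n i ∨ g = (xGen n i)⁻¹

/-- The length `l(u)`: the minimal number of letters (generators or inverses of
generators) needed to write `u` as a product. -/
noncomputable def vLength {n : ℕ} (u : Vershik n) : ℕ :=
  sInf {k | ∃ L : List (Vershik n), L.length = k ∧ (∀ g ∈ L, IsLetter n g) ∧ L.prod = u}

/-- Conditions (i)–(iii) on the (1-indexed) index sequence of an expression
`x_{i_1}^{μ_1} ⋯ x_{i_k}^{μ_k}`, recorded as a list of pairs (index, exponent):
for consecutive 1-based generator indices `a = i_j` and `b = i_{j+1}`: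
(i) if `a = 1` then `b > 1`; (ii) if `1 < a < n` then `b = a - 1` or `b > a`;
(iii) if `a = n` then `b = n - 1`. -/
def KBIndexConds (n : ℕ) (L : List (Fin n × ℤ)) : Prop :=
  ∀ j : ℕ, ∀ hj : j + 1 < L.length,
    (((L[j]'(Nat.lt_of_succ_lt hj)).1 : ℕ) + 1 = 1 → 1 < ((L[j+1]'hj).1 : ℕ) + 1) ∧
    (1 < ((L[j]'(Nat.lt_of_succ_lt hj)).1 : ℕ) + 1 →
      ((L[j]'(Nat.lt_of_succ_lt hj)).1 : ℕ) + 1 < n →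
      (((L[j+1]'hj).1 : ℕ) + 1 = ((L[j]'(Nat.lt_of_succ_lt hj)).1 : ℕ) + 1 - 1 ∨
        ((L[j]'(Nat.lt_of_succ_lt hj)).1 : ℕ) + 1 < ((L[j+1]'hj).1 : ℕ) + 1)) ∧
    (((L[j]'(Nat.lt_of_succ_lt hj)).1 : ℕ) + 1 = n → ((L[j+1]'hj).1 : ℕ) + 1 = n - 1)

/-- `L` (a list of pairs `(i_j, μ_j)` of a generator index and a nonzero exponent)
is a Knuth–Bendix normal form of `u ∈ V_n`: `u = x_{i_1}^{μ_1} ⋯ x_{i_k}^{μ_k}`,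
all `μ_j ≠ 0`, `Σ |μ_j| = l(u)`, and the index sequence satisfies (i)–(iii). -/
def IsKBNormalForm (n : ℕ) (u : Vershik n) (L : List (Fin n × ℤ)) : Prop :=
  (∀ p ∈ L, p.2 ≠ 0) ∧
  (L.map fun p => xGen n p.1 ^ p.2).prod = u ∧
  (L.map fun p => p.2.natAbs).sum = vLength u ∧
  KBIndexConds n L

namespace VKB

variable {n : ℕ}

/-- A letter: generator index plus sign (`true` = positive). -/
abbrev Ltr (n : ℕ) := Fin n × Bool

def linv (a : Ltr n) : Ltr n := (a.1, !a.2)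

@[simp] lemma linv_linv (a : Ltr n) : linv (linv a) = a := by
  cases a with | mk i s => simp [linv]

@[simp] lemma linv_fst (a : Ltr n) : (linv a).1 = a.1 := rfl

/-- Independence (commutation) of letters. -/
def indep (a b : Ltr n) : Prop := (a.1 : ℕ) + 2 ≤ b.1 ∨ (b.1 : ℕ) + 2 ≤ a.1

lemma indep.symm {a b : Ltr n} (h : indep a b) : indep b a := h.elim .inr .inl

lemma indep.fst_ne {a b : Ltr n} (h : indep a b) : (a.1 : ℕ) ≠ (b.1 : ℕ) := by
  rcases h with h | h <;> omega

lemma indep_linv_left {a b : Ltr n} (h : indep a b) : indep (linv a) b := h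
lemma indep_linv_right {a b : Ltr n} (h : indep a b) : indep a (linv b) := h

/-- One swap of adjacent independent letters. -/
def Sw (W₁ W₂ : List (Ltr n)) : Prop :=
  ∃ P Q a b, indep a b ∧ W₁ = P ++ a :: b :: Q ∧ W₂ = P ++ b :: a :: Q

lemma Sw.symm {W₁ W₂ : List (Ltr n)} : Sw W₁ W₂ → Sw W₂ W₁ := by
  rintro ⟨P, Q, a, b, h, rfl, rfl⟩; exact ⟨P, Q, b, a, h.symm, rfl, rfl⟩

/-- Trace equivalence: generated by swaps of adjacent independent letters. -/
def Tr : List (Ltr n) → List (Ltr n) → Prop := Relation.EqvGen Sw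

lemma Tr.refl (W : List (Ltr n)) : Tr W W := Relation.EqvGen.refl W
lemma Tr.symm {W₁ W₂ : List (Ltr n)} (h : Tr W₁ W₂) : Tr W₂ W₁ := Relation.EqvGen.symm _ _ h
lemma Tr.trans {W₁ W₂ W₃ : List (Ltr n)} (h : Tr W₁ W₂) (h' : Tr W₂ W₃) : Tr W₁ W₃ :=
  Relation.EqvGen.trans _ _ _ h h'
lemma Sw.tr {W₁ W₂ : List (Ltr n)} (h : Sw W₁ W₂) : Tr W₁ W₂ := Relation.EqvGen.rel _ _ h

/-- Lift a `Sw`-preserving map to a `Tr`-preserving one. -/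
lemma Tr.map {f : List (Ltr n) → List (Ltr n)}
    (hf : ∀ a b, Sw a b → Tr (f a) (f b)) {W₁ W₂ : List (Ltr n)} (h : Tr W₁ W₂) :
    Tr (f W₁) (f W₂) := by
  induction h with
  | rel a b h => exact hf _ _ h
  | refl a => exact Tr.refl _
  | symm a b _ ih => exact ih.symm
  | trans a b c _ _ ih₁ ih₂ => exact ih₁.trans ih₂

lemma Tr.cons (a : Ltr n) {W₁ W₂ : List (Ltr n)} (h : Tr W₁ W₂) : Tr (a :: W₁) (a :: W₂) := by
  refine Tr.map (f := (a :: ·)) ?_ h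
  rintro x y ⟨P, Q, c, d, hcd, rfl, rfl⟩
  exact (Sw.tr ⟨a :: P, Q, c, d, hcd, rfl, rfl⟩)

lemma Tr.append_left (P : List (Ltr n)) {W₁ W₂ : List (Ltr n)} (h : Tr W₁ W₂) :
    Tr (P ++ W₁) (P ++ W₂) := by
  induction P with
  | nil => exact h
  | cons a P ih => exact ih.cons a

lemma Tr.append_right {W₁ W₂ : List (Ltr n)} (h : Tr W₁ W₂) (Q : List (Ltr n)) :
    Tr (W₁ ++ Q) (W₂ ++ Q) := by
  refine Tr.map (f := (· ++ Q)) ?_ h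
  rintro x y ⟨P, R, c, d, hcd, rfl, rfl⟩
  exact Sw.tr ⟨P, R ++ Q, c, d, hcd, by simp, by simp⟩

lemma Tr.length_eq {W₁ W₂ : List (Ltr n)} (h : Tr W₁ W₂) : W₁.length = W₂.length := by
  induction h with
  | rel a b h => rcases h with ⟨P, Q, c, d, _, rfl, rfl⟩; simp
  | refl a => rfl
  | symm _ _ _ ih => omega
  | trans _ _ _ _ _ ih₁ ih₂ => omega

/-- Bubble an independent letter to the front. -/
lemma tr_bubble {a : Ltr n} {P : List (Ltr n)} (hP : ∀ c ∈ P, indep c a) (Q : List (Ltr n)) :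
    Tr (P ++ a :: Q) (a :: (P ++ Q)) := by
  induction P with
  | nil => exact Tr.refl _
  | cons c P ih =>
    have h1 : Tr (c :: (P ++ a :: Q)) (c :: (a :: (P ++ Q))) :=
      (ih (fun x hx => hP x (List.mem_cons_of_mem _ hx))).cons c
    refine h1.trans (Sw.tr ⟨[], P ++ Q, c, a, hP c (by simp), rfl, rfl⟩)

/-! ### Invariants of trace equivalence -/

/-- the first letter with index `i` -/
def fnd (i : Fin n) (W : List (Ltr n)) : Option (Ltr n) := W.find? (fun c => c.1 = i)

lemma fnd_sw {i : Fin n} {W₁ W₂ : List (Ltr n)} (h : Sw W₁ W₂) : fnd i W₁ = fnd i W₂ := by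
  rcases h with ⟨P, Q, a, b, hab, rfl, rfl⟩
  unfold fnd
  simp only [List.find?_append]
  congr 1
  simp only [List.find?_cons]
  rcases ha : (decide (a.1 = i)) with _ | _ <;> rcases hb : (decide (b.1 = i)) with _ | _ <;>
    simp_all
  exact absurd (ha ▸ hb) (fun h => hab.fst_ne (by rw [ha, hb]))

lemma fnd_tr {i : Fin n} {W₁ W₂ : List (Ltr n)} (h : Tr W₁ W₂) : fnd i W₁ = fnd i W₂ := by
  induction h with
  | rel a b h => exact fnd_sw h
  | refl a => rfl
  | symm _ _ _ ih => exact ih.symm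
  | trans _ _ _ _ _ ih₁ ih₂ => exact ih₁.trans ih₂

/-- delete the first letter with index `i` -/
def delF (i : Fin n) (W : List (Ltr n)) : List (Ltr n) := W.eraseP (fun c => c.1 = i)

lemma delF_cons_self {a : Ltr n} (W : List (Ltr n)) : delF a.1 (a :: W) = W := by
  simp [delF, List.eraseP_cons]

lemma delF_sw {i : Fin n} {W₁ W₂ : List (Ltr n)} (h : Sw W₁ W₂) : Tr (delF i W₁) (delF i W₂) := by
  rcases h with ⟨P, Q, a, b, hab, rfl, rfl⟩
  unfold delF
  by_cases hP : ∃ c ∈ P, (c.1 = i)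
  · rcases hP with ⟨c, hc, hci⟩
    rw [List.eraseP_append_left (by simp [hci]) _ hc,
        List.eraseP_append_left (by simp [hci]) _ hc]
    exact Sw.tr ⟨P.eraseP _, Q, a, b, hab, rfl, rfl⟩
  · push_neg at hP
    have hP' : ∀ c ∈ P, ¬((fun c : Ltr n => decide (c.1 = i)) c = true) := by
      intro c hc; simpa using hP c hc
    rw [List.eraseP_append_right _ hP', List.eraseP_append_right _ hP']
    by_cases ha : a.1 = i
    · have hb : ¬(b.1 = i) := fun hb => hab.fst_ne (by rw [ha, hb])
      have e1 : List.eraseP (fun c : Ltr n => decide (c.1 = i)) (a :: b :: Q) = b :: Q := by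
        simp [List.eraseP_cons, ha, hb]
      have e2 : List.eraseP (fun c : Ltr n => decide (c.1 = i)) (b :: a :: Q) = b :: Q := by
        simp [List.eraseP_cons, ha, hb]
      rw [e1, e2]; exact Relation.EqvGen.refl _
    · by_cases hb : b.1 = i
      · have e1 : List.eraseP (fun c : Ltr n => decide (c.1 = i)) (a :: b :: Q) = a :: Q := by
          simp [List.eraseP_cons, ha, hb]
        have e2 : List.eraseP (fun c : Ltr n => decide (c.1 = i)) (b :: a :: Q) = a :: Q := by
          simp [List.eraseP_cons, ha, hb]
        rw [e1, e2]; exact Relation.EqvGen.refl _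
      · have e1 : List.eraseP (fun c : Ltr n => decide (c.1 = i)) (a :: b :: Q)
            = a :: b :: List.eraseP (fun c : Ltr n => decide (c.1 = i)) Q := by
          simp [List.eraseP_cons, ha, hb]
        have e2 : List.eraseP (fun c : Ltr n => decide (c.1 = i)) (b :: a :: Q)
            = b :: a :: List.eraseP (fun c : Ltr n => decide (c.1 = i)) Q := by
          simp [List.eraseP_cons, ha, hb]
        rw [e1, e2]; exact Sw.tr ⟨P, _, a, b, hab, rfl, rfl⟩

lemma delF_tr {i : Fin n} {W₁ W₂ : List (Ltr n)} (h : Tr W₁ W₂) : Tr (delF i W₁) (delF i W₂) := by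
  induction h with
  | rel a b h => exact delF_sw h
  | refl a => exact Tr.refl _
  | symm _ _ _ ih => exact ih.symm
  | trans _ _ _ _ _ ih₁ ih₂ => exact ih₁.trans ih₂

/-- Left cancellation for traces. -/
lemma tr_cancel {a : Ltr n} {V V' : List (Ltr n)} (h : Tr (a :: V) (a :: V')) : Tr V V' := by
  have := delF_tr (i := a.1) h
  rwa [delF_cons_self, delF_cons_self] at this

/-- Heads with the same index are equal. -/
lemma tr_head_eq {a b : Ltr n} {V V' : List (Ltr n)} (h : Tr (a :: V) (b :: V'))
    (hi : a.1 = b.1) : a = b := by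
  have := fnd_tr (i := a.1) h
  unfold fnd at this
  rw [List.find?_cons_of_pos (by simp), List.find?_cons_of_pos (by simp [hi])] at this
  exact Option.some_injective _ this

/-- `a` occurs in `W` with all earlier letters independent of it. -/
def Ini (a : Ltr n) (W : List (Ltr n)) : Prop :=
  ∃ P Q, W = P ++ a :: Q ∧ ∀ c ∈ P, indep c a

lemma ini_head (a : Ltr n) (W : List (Ltr n)) : Ini a (a :: W) := ⟨[], W, rfl, by simp⟩

lemma ini_sw {a : Ltr n} {W₁ W₂ : List (Ltr n)} (h : Sw W₁ W₂) : Ini a W₁ → Ini a W₂ := by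
  rcases h with ⟨P, Q, x, y, hxy, rfl, rfl⟩
  rintro ⟨P', Q', hsplit, hP'⟩
  rcases List.append_eq_append_iff.1 hsplit.symm with ⟨l, hPl, hl⟩ | ⟨l, hPl, hl⟩
  · rcases l with _ | ⟨c, l'⟩
    · simp only [List.nil_append] at hl
      injection hl with h1 h2
      subst h1; subst h2
      simp only [List.append_nil] at hPl; subst hPl
      refine ⟨P ++ [y], Q, by simp, fun c hc => ?_⟩
      rcases List.mem_append.1 hc with hc | hc
      · exact hP' c hc
      · simp only [List.mem_singleton] at hc; subst hc; exact hxy.symm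
    · simp only [List.cons_append] at hl
      injection hl with h1 h2
      subst h1; subst h2; subst hPl
      exact ⟨P', l' ++ y :: x :: Q, by simp, hP'⟩
  · rcases l with _ | ⟨c, l'⟩
    · simp only [List.nil_append] at hl
      injection hl with h1 h2
      subst h1; subst h2
      simp only [List.append_nil] at hPl; subst hPl
      refine ⟨P' ++ [y], Q, by simp, fun c hc => ?_⟩
      rcases List.mem_append.1 hc with hc | hc
      · exact hP' c hc
      · simp only [List.mem_singleton] at hc; subst hc; exact hxy.symm
    · simp only [List.cons_append] at hl
      injection hl with h1 h2
      subst h1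
      rcases l' with _ | ⟨d, l''⟩
      · simp only [List.nil_append] at h2
        injection h2 with h3 h4
        subst h3; subst h4; subst hPl
        exact ⟨P, x :: Q, by simp, fun c hc => hP' c (by simp [hc])⟩
      · simp only [List.cons_append] at h2
        injection h2 with h3 h4
        subst h3; subst hPl
        refine ⟨P ++ y :: x :: l'', Q', by rw [h4]; simp, fun c hc => ?_⟩
        apply hP' c
        simp only [List.mem_append, List.mem_cons] at hc ⊢
        tauto

lemma ini_tr {a : Ltr n} {W₁ W₂ : List (Ltr n)} (h : Tr W₁ W₂) : Ini a W₁ ↔ Ini a W₂ := by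
  induction h with
  | rel x y h => exact ⟨ini_sw h, ini_sw h.symm⟩
  | refl x => exact Iff.rfl
  | symm _ _ _ ih => exact ih.symm
  | trans _ _ _ _ _ ih₁ ih₂ => exact ih₁.trans ih₂

lemma tr_of_ini {a : Ltr n} {W : List (Ltr n)} (h : Ini a W) : ∃ V, Tr W (a :: V) := by
  rcases h with ⟨P, Q, rfl, hP⟩
  exact ⟨P ++ Q, tr_bubble hP Q⟩

lemma ini_cons_elim {a b : Ltr n} {W : List (Ltr n)} (h : Ini a (b :: W)) :
    a = b ∨ (indep b a ∧ Ini a W) := by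
  rcases h with ⟨P, Q, hsplit, hP⟩
  rcases P with _ | ⟨c, P'⟩
  · injection hsplit with h1 _; exact Or.inl h1.symm
  · injection hsplit with h1 h2
    subst h1
    exact Or.inr ⟨hP b (by simp), ⟨P', Q, h2, fun c hc => hP c (by simp [hc])⟩⟩

/-- Two initial letters with the same index are equal (to the head, in particular). -/
lemma ini_same_index {a b : Ltr n} {W : List (Ltr n)} (ha : Ini a W) (hb : Ini b W)
    (hi : a.1 = b.1) : a = b := by
  rcases tr_of_ini ha with ⟨V, hV⟩
  have hb' : Ini b (a :: V) := (ini_tr hV).1 hb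
  rcases ini_cons_elim hb' with h | ⟨h, _⟩
  · exact h.symm
  · exact absurd (congrArg Fin.val hi) h.fst_ne

/-- Unique factorization at the first occurrence of an index. -/
lemma split_unique {i : Fin n} {a b : Ltr n} {P P' Q Q' : List (Ltr n)}
    (h : P ++ a :: Q = P' ++ b :: Q') (ha : a.1 = i) (hb : b.1 = i)
    (hP : ∀ c ∈ P, c.1 ≠ i) (hP' : ∀ c ∈ P', c.1 ≠ i) :
    P = P' ∧ a = b ∧ Q = Q' := by
  rcases List.append_eq_append_iff.1 h with ⟨l, hPl, hl⟩ | ⟨l, hPl, hl⟩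
  · rcases l with _ | ⟨c, l''⟩
    · simp only [List.append_nil] at hPl; subst hPl
      simp only [List.nil_append] at hl
      injection hl with h1 h2
      exact ⟨rfl, h1, h2⟩
    · simp only [List.cons_append] at hl
      injection hl with h1 h2
      subst h1
      exact absurd ha (hP' a (by rw [hPl]; simp))
  · rcases l with _ | ⟨c, l''⟩
    · simp only [List.append_nil] at hPl; subst hPl
      simp only [List.nil_append] at hl
      injection hl with h1 h2
      exact ⟨rfl, h1.symm, h2.symm⟩
    · simp only [List.cons_append] at hl
      injection hl with h1 h2
      subst h1
      exact absurd hb (hP b (by rw [hPl]; simp))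

/-! ### Reduced words -/

/-- `U` contains an adjacent cancelling pair. -/
def Bad (U : List (Ltr n)) : Prop := ∃ P c Q, U = P ++ c :: linv c :: Q

/-- `W` is reduced: no trace-equivalent word contains an adjacent cancelling pair. -/
def Red (W : List (Ltr n)) : Prop := ∀ U, Tr W U → ¬ Bad U

lemma red_nil : Red (n := n) [] := by
  intro U hU hbad
  rcases hbad with ⟨P, c, Q, rfl⟩
  have := hU.length_eq
  simp at this

lemma Red.tr {W W' : List (Ltr n)} (h : Red W) (ht : Tr W W') : Red W' :=
  fun U hU => h U (ht.trans hU)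

lemma Red.of_cons {a : Ltr n} {W : List (Ltr n)} (h : Red (a :: W)) : Red W := by
  intro U hU hbad
  rcases hbad with ⟨P, c, Q, rfl⟩
  exact h (a :: (P ++ c :: linv c :: Q)) (hU.cons a) ⟨a :: P, c, Q, rfl⟩

lemma Red.no_head_cancel {a : Ltr n} {W : List (Ltr n)} (h : Red (a :: W)) :
    ¬ ∃ V, Tr W (linv a :: V) := by
  rintro ⟨V, hV⟩
  exact h (a :: linv a :: V) (hV.cons a) ⟨[], a, V, rfl⟩

/-- Key lemma: prepending a non-cancelling letter preserves reducedness. -/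
lemma Red.cons {a : Ltr n} {W : List (Ltr n)} (hW : Red W)
    (hnc : ¬ ∃ V, Tr W (linv a :: V)) : Red (a :: W) := by
  intro U hU hbad
  rcases hbad with ⟨P, c, Q, rfl⟩
  have hdel : Tr W (delF a.1 (P ++ c :: linv c :: Q)) := by
    have := delF_tr (i := a.1) hU
    rwa [delF_cons_self] at this
  by_cases hP : ∃ e ∈ P, e.1 = a.1
  · rcases hP with ⟨e, he, hei⟩
    rw [show delF a.1 (P ++ c :: linv c :: Q) = delF a.1 P ++ c :: linv c :: Q from
      List.eraseP_append_left (by simp [hei]) _ he] at hdel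
    exact hW _ hdel ⟨delF a.1 P, c, Q, rfl⟩
  · push_neg at hP
    by_cases hc : c.1 = a.1
    · -- the pair is at the first occurrence of index a.1; c must equal a
      have hfnd : fnd a.1 (a :: W) = fnd a.1 (P ++ c :: linv c :: Q) := fnd_tr hU
      have h1 : fnd a.1 (a :: W) = some a := by
        unfold fnd; rw [List.find?_cons_of_pos (by simp)]
      have h2 : fnd a.1 (P ++ c :: linv c :: Q) = some c := by
        unfold fnd
        rw [List.find?_append, List.find?_eq_none.2 (by intro x hx; simpa using hP x hx)]
        simp [List.find?_cons_of_pos, hc]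
      have hca : c = a := by
        rw [h1, h2] at hfnd; exact (Option.some_injective _ hfnd).symm
      subst hca
      -- `c` is initial in `U`, so `P` is independent of `c`
      have hini : Ini c (P ++ c :: linv c :: Q) := (ini_tr hU).1 (ini_head c W)
      rcases hini with ⟨P₂, Q₂, hsplit, hP₂⟩
      obtain ⟨rfl, -, rfl⟩ := split_unique hsplit (i := c.1) rfl rfl
        (fun e he => hP e he) (fun e he => fun hee => (hP₂ e he).fst_ne (by rw [hee]))
      have hb1 : Tr (P ++ c :: linv c :: Q) (c :: (P ++ linv c :: Q)) :=
        tr_bubble hP₂ (linv c :: Q)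
      have hWtr : Tr W (P ++ linv c :: Q) := tr_cancel (hU.trans hb1)
      have hb2 : Tr (P ++ linv c :: Q) (linv c :: (P ++ Q)) :=
        tr_bubble (fun e he => indep_linv_right (hP₂ e he)) Q
      exact hnc ⟨P ++ Q, hWtr.trans hb2⟩
    · -- the deleted letter is inside Q; the bad pair survives
      have hcl : ¬((linv c).1 = a.1) := by simpa using hc
      rw [show delF a.1 (P ++ c :: linv c :: Q) = P ++ c :: linv c :: delF a.1 Q by
        rw [delF, List.eraseP_append_right _ (by intro x hx; simpa using hP x hx)]
        simp only [List.eraseP_cons, hc, hcl, decide_eq_true_eq]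
        simp [delF]] at hdel
      exact hW _ hdel ⟨P, c, delF a.1 Q, rfl⟩


namespace Act
variable (n) in
/-- Reduced words. -/
def RedW := {W : List (Ltr n) // Red W}

instance redSetoid (n : ℕ) : Setoid (RedW n) :=
  ⟨fun W W' => Tr W.1 W'.1, ⟨fun _ => Tr.refl _, Tr.symm, Tr.trans⟩⟩

variable (n) in
/-- Reduced traces. -/
def T := Quotient (redSetoid n)

def mk (W : List (Ltr n)) (h : Red W) : T n := Quotient.mk _ ⟨W, h⟩

lemma mk_eq {W W' : List (Ltr n)} {h : Red W} {h' : Red W'} (ht : Tr W W') :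
    mk W h = mk W' h' := Quotient.sound ht

open Classical in
lemma mk_exact {W W' : List (Ltr n)} {h : Red W} {h' : Red W'} (he : mk W h = mk W' h') :
    Tr W W' := Quotient.exact he

open Classical in
/-- The action of the letter `a` on a reduced word. -/
noncomputable def actF (a : Ltr n) (W : RedW n) : T n :=
  if h : ∃ V, Tr W.1 (linv a :: V) then
    mk h.choose ((W.2.tr h.choose_spec).of_cons)
  else mk (a :: W.1) (W.2.cons h)

/-- The action of the letter `a` on reduced traces. -/
noncomputable def actT (a : Ltr n) : T n → T n :=
  Quotient.lift (actF a) (by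
    rintro W W' (hWW' : Tr W.1 W'.1)
    unfold actF
    by_cases h : ∃ V, Tr W.1 (linv a :: V)
    · have h' : ∃ V, Tr W'.1 (linv a :: V) := by
        rcases h with ⟨V, hV⟩; exact ⟨V, hWW'.symm.trans hV⟩
      rw [dif_pos h, dif_pos h']
      exact mk_eq (tr_cancel (h.choose_spec.symm.trans (hWW'.trans h'.choose_spec)))
    · have h' : ¬ ∃ V, Tr W'.1 (linv a :: V) := by
        rintro ⟨V, hV⟩; exact h ⟨V, hWW'.trans hV⟩
      rw [dif_neg h, dif_neg h']
      exact mk_eq (hWW'.cons a))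

lemma actT_mk {a : Ltr n} {W : List (Ltr n)} {hW : Red W} :
    actT a (mk W hW) = actF a ⟨W, hW⟩ := rfl

lemma actT_cancel {a : Ltr n} {W V : List (Ltr n)} {hW : Red W} {hV : Red V}
    (h : Tr W (linv a :: V)) : actT a (mk W hW) = mk V hV := by
  have hex : ∃ V, Tr W (linv a :: V) := ⟨V, h⟩
  rw [actT_mk]
  unfold actF
  rw [dif_pos hex]
  exact mk_eq (tr_cancel (hex.choose_spec.symm.trans h))

lemma actT_cons {a : Ltr n} {W : List (Ltr n)} {hW : Red W}
    (h : ¬ ∃ V, Tr W (linv a :: V)) : actT a (mk W hW) = mk (a :: W) (hW.cons h) := by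
  rw [actT_mk]
  unfold actF
  rw [dif_neg h]

lemma actT_actT_linv (a : Ltr n) (t : T n) : actT a (actT (linv a) t) = t := by
  induction t using Quotient.inductionOn with | h W =>
  rcases W with ⟨W, hW⟩
  show actT a (actT (linv a) (mk W hW)) = mk W hW
  by_cases h : ∃ V, Tr W (linv (linv a) :: V)
  · rcases h with ⟨V, hV⟩
    rw [linv_linv] at hV
    have hV' : Red V := (hW.tr hV).of_cons
    rw [actT_cancel (hV := hV') (show Tr W (linv (linv a) :: V) by rw [linv_linv]; exact hV)]
    have hnc : ¬ ∃ U, Tr V (linv a :: U) := by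
      rintro ⟨U, hU⟩
      exact (hW.tr hV) (a :: linv a :: U) ((hU.cons a)) ⟨[], a, U, rfl⟩
    rw [actT_cons hnc]
    exact mk_eq (hV.symm)
  · rw [actT_cons h]
    exact actT_cancel (Tr.refl _)

lemma tr_two_heads {a b : Ltr n} {W : List (Ltr n)} (ha : Ini a W) (hb : Ini b W)
    (hne : (a.1 : ℕ) ≠ b.1) : ∃ Z, Tr W (a :: b :: Z) := by
  rcases tr_of_ini ha with ⟨V, hV⟩
  have hb' : Ini b (a :: V) := (ini_tr hV).1 hb
  rcases ini_cons_elim hb' with h | ⟨-, hbV⟩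
  · exact absurd (congrArg (fun c : Ltr n => (c.1 : ℕ)) h) (fun e => hne e.symm)
  · rcases tr_of_ini hbV with ⟨Z, hZ⟩
    exact ⟨Z, hV.trans (hZ.cons a)⟩

lemma ini_tail {a b : Ltr n} {W V : List (Ltr n)} (h : Tr (b :: W) (a :: V))
    (hne : (a.1 : ℕ) ≠ b.1) : ∃ V', Tr W (a :: V') := by
  have : Ini a (b :: W) := (ini_tr h).2 (ini_head a V)
  rcases ini_cons_elim this with h' | ⟨-, h'⟩
  · exact absurd (congrArg (fun c : Ltr n => (c.1 : ℕ)) h') hne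
  · exact tr_of_ini h'

lemma actT_comm_aux {a b : Ltr n} (hab : indep a b) {W : List (Ltr n)} (hW : Red W)
    (hb : ∃ V, Tr W (linv b :: V)) (ha : ¬ ∃ V, Tr W (linv a :: V)) :
    actT a (actT b (mk W hW)) = actT b (actT a (mk W hW)) := by
  obtain ⟨Vb, hVb⟩ := hb
  have hRVb : Red Vb := (hW.tr hVb).of_cons
  have hnca : ¬ ∃ U, Tr Vb (linv a :: U) := by
    rintro ⟨U, hU⟩
    refine ha ⟨linv b :: U, (hVb.trans (hU.cons (linv b))).trans ?_⟩
    exact Sw.tr ⟨[], U, linv b, linv a, hab.symm, rfl, rfl⟩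
  rw [actT_cancel (hV := hRVb) hVb, actT_cons hnca, actT_cons ha]
  have hc : Tr (a :: W) (linv b :: (a :: Vb)) :=
    (hVb.cons a).trans (Sw.tr ⟨[], Vb, a, linv b, indep_linv_right hab, rfl, rfl⟩)
  rw [actT_cancel (hV := hRVb.cons hnca) hc]

lemma actT_comm {a b : Ltr n} (hab : indep a b) (t : T n) :
    actT a (actT b t) = actT b (actT a t) := by
  induction t using Quotient.inductionOn with | h W =>
  rcases W with ⟨W, hW⟩
  show actT a (actT b (mk W hW)) = actT b (actT a (mk W hW))
  by_cases hb : ∃ V, Tr W (linv b :: V) <;> by_cases ha : ∃ V, Tr W (linv a :: V)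
  · -- both cancel
    obtain ⟨Va, hVa⟩ := ha
    obtain ⟨Vb, hVb⟩ := hb
    have hia : Ini (linv a) W := (ini_tr hVa).2 (ini_head _ _)
    have hib : Ini (linv b) W := (ini_tr hVb).2 (ini_head _ _)
    obtain ⟨Z, hZ⟩ := tr_two_heads hia hib hab.fst_ne
    have hZ' : Tr W (linv b :: linv a :: Z) :=
      hZ.trans (Sw.tr ⟨[], Z, linv a, linv b, hab, rfl, rfl⟩)
    have hR1 : Red (linv a :: Z) := (hW.tr hZ').of_cons
    have hR2 : Red (linv b :: Z) := (hW.tr hZ).of_cons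
    have hRZ : Red Z := hR1.of_cons
    rw [actT_cancel (hV := hR1) hZ', actT_cancel (hV := hR2) hZ,
       actT_cancel (hV := hRZ) (Tr.refl _), actT_cancel (hV := hRZ) (Tr.refl _)]
  · exact actT_comm_aux hab hW hb ha
  · exact (actT_comm_aux hab.symm hW ha hb).symm
  · -- both prepend
    have hnb : ¬ ∃ U, Tr (a :: W) (linv b :: U) := by
      rintro ⟨U, hU⟩
      rcases ini_tail hU (by simpa using fun e => hab.fst_ne e.symm) with ⟨U', hU'⟩
      exact hb ⟨U', hU'⟩
    have hna : ¬ ∃ U, Tr (b :: W) (linv a :: U) := by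
      rintro ⟨U, hU⟩
      rcases ini_tail hU (by simpa using hab.fst_ne) with ⟨U', hU'⟩
      exact ha ⟨U', hU'⟩
    rw [actT_cons hb, actT_cons ha, actT_cons hna, actT_cons hnb]
    exact mk_eq (Sw.tr ⟨[], W, a, b, hab, rfl, rfl⟩)

/-- The action of a letter, as a permutation of reduced traces. -/
noncomputable def actE (a : Ltr n) : Equiv.Perm (T n) where
  toFun := actT a
  invFun := actT (linv a)
  left_inv := fun t => by
    conv_rhs => rw [← actT_actT_linv (linv a) t]
    rw [linv_linv]
  right_inv := actT_actT_linv a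

end Act

/-! ### Evaluation in the Vershik group -/

def toV (a : Ltr n) : Vershik n := if a.2 then xGen n a.1 else (xGen n a.1)⁻¹

lemma toV_isLetter (a : Ltr n) : IsLetter n (toV a) := by
  refine ⟨a.1, ?_⟩
  unfold toV
  rcases a.2 with _ | _ <;> simp

lemma xGen_commute {i j : Fin n} (hij : (i : ℕ) + 2 ≤ j ∨ (j : ℕ) + 2 ≤ i) :
    Commute (xGen n i) (xGen n j) := by
  have hmem : (FreeGroup.of i * FreeGroup.of j * (FreeGroup.of i)⁻¹ * (FreeGroup.of j)⁻¹ :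
      FreeGroup (Fin n)) ∈ VershikRels n := ⟨i, j, by rcases abs_cases ((i : ℤ) - (j : ℤ)) with ⟨h,_⟩|⟨h,_⟩ <;> omega, rfl⟩
  have h1 : (QuotientGroup.mk (FreeGroup.of i * FreeGroup.of j * (FreeGroup.of i)⁻¹ *
      (FreeGroup.of j)⁻¹) : Vershik n) = 1 :=
    (QuotientGroup.eq_one_iff _).2 (Subgroup.subset_normalClosure hmem)
  have h2 : xGen n i * xGen n j * (xGen n i)⁻¹ * (xGen n j)⁻¹ = 1 := by
    rw [show xGen n i = QuotientGroup.mk (FreeGroup.of i) from rfl,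
        show xGen n j = QuotientGroup.mk (FreeGroup.of j) from rfl]
    exact h1
  rw [mul_inv_eq_one, mul_inv_eq_iff_eq_mul] at h2
  exact h2

lemma toV_commute {a b : Ltr n} (hab : indep a b) : Commute (toV a) (toV b) := by
  have h := xGen_commute (n := n) (i := a.1) (j := b.1) hab
  unfold toV
  rcases a.2 with _ | _ <;> rcases b.2 with _ | _ <;>
    simp only [Bool.false_eq_true, if_false, if_true] <;>
    first
      | exact h
      | exact h.inv_left
      | exact h.inv_right
      | exact h.inv_left.inv_right

lemma toV_mul_linv (a : Ltr n) : toV a * toV (linv a) = 1 := by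
  unfold toV linv
  rcases a.2 with _ | _ <;> simp

/-- evaluation of a word in the Vershik group -/
def prodOf (W : List (Ltr n)) : Vershik n := (W.map toV).prod

@[simp] lemma prodOf_nil : prodOf (n := n) [] = 1 := rfl

lemma prodOf_cons (a : Ltr n) (W : List (Ltr n)) : prodOf (a :: W) = toV a * prodOf W := by
  simp [prodOf]

lemma prodOf_append (W₁ W₂ : List (Ltr n)) : prodOf (W₁ ++ W₂) = prodOf W₁ * prodOf W₂ := by
  simp [prodOf]

lemma prodOf_tr {W₁ W₂ : List (Ltr n)} (h : Tr W₁ W₂) : prodOf W₁ = prodOf W₂ := by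
  induction h with
  | rel x y h =>
    rcases h with ⟨P, Q, a, b, hab, rfl, rfl⟩
    simp only [prodOf_append, prodOf_cons, mul_assoc]
    rw [← mul_assoc (toV a), (toV_commute hab).eq, mul_assoc]
  | refl x => rfl
  | symm _ _ _ ih => exact ih.symm
  | trans _ _ _ _ _ ih₁ ih₂ => exact ih₁.trans ih₂

/-- A geodesic word is reduced. -/
lemma red_of_geodesic {W : List (Ltr n)} (h : W.length = vLength (prodOf W)) : Red W := by
  intro U hU hbad
  rcases hbad with ⟨P, c, Q, rfl⟩
  have hlen : W.length = P.length + Q.length + 2 := by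
    have := hU.length_eq; simp at this; omega
  have hprod : prodOf W = prodOf (P ++ Q) := by
    rw [prodOf_tr hU, prodOf_append, prodOf_append, prodOf_cons, prodOf_cons,
      ← mul_assoc (toV c), toV_mul_linv, one_mul]
  have hle : vLength (prodOf W) ≤ P.length + Q.length := by
    apply Nat.sInf_le
    exact ⟨(P ++ Q).map toV, by simp,
      fun g hg => by
        rcases List.mem_map.1 hg with ⟨a, _, rfl⟩
        exact toV_isLetter a,
      by rw [hprod]; rfl⟩
  omega

open Act in
/-- The homomorphism to permutations of reduced traces. -/
noncomputable def phi : Vershik n →* Equiv.Perm (T n) :=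
  PresentedGroup.toGroup (f := fun i => actE ((i, true) : Ltr n)) (by
    rintro r ⟨i, j, hij, rfl⟩
    have hind : indep ((i, true) : Ltr n) ((j, true) : Ltr n) := by
      unfold indep
      simp only
      rcases abs_cases ((i : ℤ) - (j : ℤ)) with ⟨h,_⟩|⟨h,_⟩ <;> omega
    simp only [map_mul, map_inv, FreeGroup.lift_apply_of]
    have hc : actE ((i, true) : Ltr n) * actE ((j, true) : Ltr n)
        = actE ((j, true) : Ltr n) * actE ((i, true) : Ltr n) := by
      ext t
      exact actT_comm hind t
    rw [hc]
    group)

open Act in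
lemma actE_inv (a : Ltr n) : (actE a)⁻¹ = actE (linv a) := by
  ext t
  show (actE a).symm t = actT (linv a) t
  rfl

open Act in
lemma phi_toV (a : Ltr n) : phi (toV a) = actE a := by
  unfold toV
  rcases ha : a.2 with _ | _
  · simp only [Bool.false_eq_true, if_false]
    rw [show xGen n a.1 = PresentedGroup.of a.1 from rfl, map_inv]
    unfold phi
    rw [PresentedGroup.toGroup.of, actE_inv]
    congr 1
    cases a with | mk i s => simp_all [linv]
  · simp only [if_true]
    rw [show xGen n a.1 = PresentedGroup.of a.1 from rfl]
    unfold phi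
    rw [PresentedGroup.toGroup.of]
    congr 1
    cases a with | mk i s => simp_all

open Act in
lemma phi_prodOf {W : List (Ltr n)} (hW : Red W) :
    phi (prodOf W) (mk [] red_nil) = mk W hW := by
  induction W with
  | nil => simp
  | cons a W ih =>
    rw [prodOf_cons, map_mul, Equiv.Perm.mul_apply, ih hW.of_cons, phi_toV]
    show actT a (mk W _) = _
    rw [actT_cons hW.no_head_cancel]

open Act in
/-- **Step 1**: geodesic words representing the same element are trace equivalent. -/
theorem tr_of_prodOf_eq {W W' : List (Ltr n)} (hW : Red W) (hW' : Red W')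
    (h : prodOf W = prodOf W') : Tr W W' := by
  have h1 := phi_prodOf hW
  have h2 := phi_prodOf hW'
  rw [h] at h1
  exact mk_exact (h1.symm.trans h2)


/-! ### Step 2: condition words are unique in their trace class -/

/-- The allowed step between consecutive (distinct-index) blocks, 0-indexed letters,
matching conditions (i)-(iii). -/
def stepOK (a b : Fin n) : Prop :=
  ((a : ℕ) + 1 = 1 → 1 < (b : ℕ) + 1) ∧
  (1 < (a : ℕ) + 1 → (a : ℕ) + 1 < n → ((b : ℕ) + 1 = (a : ℕ) + 1 - 1 ∨ (a : ℕ) + 1 < (b : ℕ) + 1)) ∧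
  ((a : ℕ) + 1 = n → (b : ℕ) + 1 = n - 1)

lemma stepOK.down_or_up {a b : Fin n} (h : stepOK a b) :
    (b : ℕ) + 1 = (a : ℕ) ∨ (a : ℕ) < (b : ℕ) := by
  obtain ⟨h1, h2, h3⟩ := h
  have ha := a.isLt; have hb := b.isLt
  rcases Nat.eq_zero_or_pos (a : ℕ) with hz | hz
  · have := h1 (by omega); omega
  · rcases lt_or_ge ((a : ℕ) + 1) n with hc | hc
    · rcases h2 (by omega) hc with h | h <;> omega
    · have := h3 (by omega); omega

lemma stepOK.ne {a b : Fin n} (h : stepOK a b) : (a : ℕ) ≠ (b : ℕ) := by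
  rcases h.down_or_up with h | h <;> omega

/-- Letter-level condition: consecutive letters are equal or make an allowed step. -/
def LC (W : List (Ltr n)) : Prop := W.Chain' (fun c d => c = d ∨ stepOK c.1 d.1)

lemma LC.tail {a : Ltr n} {W : List (Ltr n)} (h : LC (a :: W)) : LC W := List.IsChain.tail h

/-- The walk argument: everything strictly before an initial letter has
index at least two below it. -/
lemma walk_aux : ∀ (P : List (Ltr n)) (b : Ltr n) (Q : List (Ltr n)),
    LC (P ++ b :: Q) → (∀ c ∈ P, indep c b) → ∀ c ∈ P, (c.1 : ℕ) + 2 ≤ b.1 := by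
  intro P
  induction P with
  | nil => intro b Q _ _ c hc; simp at hc
  | cons d P' ih =>
    intro b Q hLC hind c hc
    have hLC' : LC (P' ++ b :: Q) := hLC.tail
    have hP' : ∀ c ∈ P', (c.1 : ℕ) + 2 ≤ b.1 :=
      ih b Q hLC' (fun c hc => hind c (by simp [hc]))
    rcases List.mem_cons.1 hc with rfl | hc
    · -- bound the head `d` using the next element
      have hdind : indep c b := hind c (by simp)
      rcases P' with _ | ⟨e, P''⟩
      · -- adjacent to b
        have hrel : c = b ∨ stepOK c.1 b.1 := List.isChain_cons_cons.1 hLC |>.1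
        rcases hrel with rfl | hrel
        · rcases hdind with h | h <;> omega
        · rcases hrel.down_or_up with h | h <;> rcases hdind with h' | h' <;> omega
      · have hrel : c = e ∨ stepOK c.1 e.1 := List.isChain_cons_cons.1 hLC |>.1
        have he : (e.1 : ℕ) + 2 ≤ b.1 := hP' e (by simp)
        rcases hrel with rfl | hrel
        · exact he
        · rcases hrel.down_or_up with h | h <;> rcases hdind with h' | h' <;> omega
    · exact hP' c hc

/-- In a condition word, any initial letter is the head or has strictly larger index. -/
lemma lc_ini {a b : Ltr n} {V : List (Ltr n)} (h : LC (a :: V)) (hb : Ini b (a :: V)) :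
    b = a ∨ (a.1 : ℕ) < b.1 := by
  rcases hb with ⟨P, Q, hsplit, hP⟩
  rcases P with _ | ⟨d, P'⟩
  · injection hsplit with h1 _; exact Or.inl h1.symm
  · injection hsplit with h1 h2
    subst h1
    subst h2
    right
    have hw := walk_aux (a :: P') b Q (by exact h) (by exact hP) a (by simp)
    omega


/-- **Step 2**: trace-equivalent condition words are equal. -/
theorem lc_tr_eq {W : List (Ltr n)} : ∀ {W' : List (Ltr n)}, LC W → LC W' → Tr W W' → W = W' := by
  induction W with
  | nil =>
    intro W' _ _ htr
    have := htr.length_eq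
    exact (List.length_eq_zero_iff.1 this.symm).symm ▸ rfl
  | cons a V ih =>
    intro W' hW hW' htr
    rcases W' with _ | ⟨b, V'⟩
    · have := htr.length_eq; simp at this
    · have hbi : Ini b (a :: V) := (ini_tr htr).2 (ini_head b V')
      have hai : Ini a (b :: V') := (ini_tr htr).1 (ini_head a V)
      have h1 := lc_ini hW hbi
      have h2 := lc_ini hW' hai
      have hab : a = b := by
        rcases h1 with h1 | h1
        · exact h1.symm
        · rcases h2 with h2 | h2
          · exact h2
          · omega
      subst hab
      have : V = V' := ih hW.tail hW'.tail (tr_cancel htr)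
      rw [this]

/-! ### Expansion of block lists into letter words -/

def expandP (p : Fin n × ℤ) : List (Ltr n) := List.replicate p.2.natAbs (p.1, decide (0 < p.2))

def expand (L : List (Fin n × ℤ)) : List (Ltr n) := L.flatMap expandP

@[simp] lemma expand_nil : expand (n := n) [] = [] := rfl

lemma expand_cons (p : Fin n × ℤ) (L : List (Fin n × ℤ)) :
    expand (p :: L) = expandP p ++ expand L := rfl

lemma prodOf_replicate (m : ℕ) (a : Ltr n) : prodOf (List.replicate m a) = toV a ^ m := by
  unfold prodOf
  rw [List.map_replicate, List.prod_replicate]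

lemma prodOf_expandP (p : Fin n × ℤ) : prodOf (expandP p) = xGen n p.1 ^ p.2 := by
  unfold expandP
  rw [prodOf_replicate]
  rcases lt_trichotomy p.2 0 with hμ | hμ | hμ
  · have hd : decide (0 < p.2) = false := by simp [not_lt.2 (le_of_lt hμ)]
    rw [hd]
    show ((xGen n p.1)⁻¹ : Vershik n) ^ p.2.natAbs = _
    rw [inv_pow, ← zpow_natCast, ← zpow_neg]
    congr 1
    omega
  · rw [hμ]; simp
  · have hd : decide (0 < p.2) = true := by simp [hμ]
    rw [hd]
    show (xGen n p.1 : Vershik n) ^ p.2.natAbs = _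
    rw [← zpow_natCast]
    congr 1
    omega

lemma prodOf_expand (L : List (Fin n × ℤ)) :
    prodOf (expand L) = (L.map fun p => xGen n p.1 ^ p.2).prod := by
  induction L with
  | nil => rfl
  | cons p L ih => rw [expand_cons, prodOf_append, prodOf_expandP, ih, List.map_cons,
      List.prod_cons]

lemma length_expand (L : List (Fin n × ℤ)) :
    (expand L).length = (L.map fun p => p.2.natAbs).sum := by
  induction L with
  | nil => rfl
  | cons p L ih => simp [expand_cons, expandP, ih]

lemma chain'_replicate_of_rel {R : Ltr n → Ltr n → Prop} (m : ℕ) {a : Ltr n} (h : R a a) :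
    List.Chain' R (List.replicate m a) := by
  induction m with
  | zero => exact List.isChain_nil
  | succ k ih =>
    rcases k with _ | k
    · exact List.isChain_singleton a
    · rw [List.replicate_succ]
      exact List.IsChain.cons_cons h ih

/-- relating `KBIndexConds` to `stepOK`. -/
lemma kb_step {p q : Fin n × ℤ} {L : List (Fin n × ℤ)} (h : KBIndexConds n (p :: q :: L)) :
    stepOK p.1 q.1 := by
  have := h 0 (by simp)
  simpa [stepOK] using this

lemma kb_tail {p : Fin n × ℤ} {L : List (Fin n × ℤ)} (h : KBIndexConds n (p :: L)) :
    KBIndexConds n L := by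
  intro j hj
  have := h (j + 1) (by simpa using Nat.succ_lt_succ hj)
  simpa using this

lemma lc_expand {L : List (Fin n × ℤ)} (hnz : ∀ p ∈ L, p.2 ≠ 0) (hkb : KBIndexConds n L) :
    LC (expand L) := by
  induction L with
  | nil => exact List.isChain_nil
  | cons p L ih =>
    rw [expand_cons]
    rw [LC]; simp only [List.Chain']; rw [List.isChain_append]
    refine ⟨chain'_replicate_of_rel _ (Or.inl rfl), ih (fun q hq => hnz q (by simp [hq])) (kb_tail hkb), ?_⟩
    intro x hx y hy
    rcases L with _ | ⟨q, L'⟩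
    · simp [expand] at hy
    · -- x is the block letter of p, y is the block letter of q
      have hx' : x = (p.1, decide (0 < p.2)) := by
        rw [expandP, List.getLast?_replicate] at hx
        have : p.2.natAbs ≠ 0 := by
          have := hnz p (by simp); omega
        simp [this] at hx
        exact hx.symm
      have hy' : y = (q.1, decide (0 < q.2)) := by
        rw [expand_cons, List.head?_append, expandP, List.head?_replicate] at hy
        have : q.2.natAbs ≠ 0 := by
          have := hnz q (by simp); omega
        simp [this] at hy
        exact hy.symm
      subst hx'; subst hy'
      exact Or.inr (kb_step hkb)

/-- `KBIndexConds` implies adjacent blocks have distinct indices. -/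
lemma kb_chain_ne {L : List (Fin n × ℤ)} (hkb : KBIndexConds n L) :
    L.Chain' (fun p q => p.1 ≠ q.1) := by
  induction L with
  | nil => exact List.isChain_nil
  | cons p L ih =>
    rcases L with _ | ⟨q, L'⟩
    · exact List.isChain_singleton p
    · refine List.IsChain.cons_cons ?_ (ih (kb_tail hkb))
      intro h
      exact (kb_step hkb).ne (congrArg Fin.val h)

lemma expand_head {r : Fin n × ℤ} {L : List (Fin n × ℤ)} (hr : r.2 ≠ 0) :
    (expand (r :: L)).head? = some (r.1, decide (0 < r.2)) := by
  rw [expand_cons, List.head?_append, expandP, List.head?_replicate]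
  have : r.2.natAbs ≠ 0 := by omega
  simp [this]

lemma rep_eq {a b : Ltr n} : ∀ {m k : ℕ} {X Y : List (Ltr n)},
    0 < m → 0 < k →
    (∀ c ∈ X.head?, c.1 ≠ a.1) → (∀ c ∈ Y.head?, c.1 ≠ b.1) →
    List.replicate m a ++ X = List.replicate k b ++ Y → a = b ∧ m = k ∧ X = Y := by
  intro m
  induction m with
  | zero => intro k X Y hm; omega
  | succ m ih =>
    intro k X Y _ hk hX hY h
    rcases k with _ | k
    · omega
    rw [List.replicate_succ, List.replicate_succ] at h
    simp only [List.cons_append] at h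
    injection h with h1 h2
    subst h1
    rcases Nat.eq_zero_or_pos m with rfl | hm
    · rcases Nat.eq_zero_or_pos k with rfl | hk'
      · simp only [List.replicate_zero, List.nil_append] at h2
        exact ⟨rfl, rfl, h2⟩
      · exfalso
        simp only [List.replicate_zero, List.nil_append] at h2
        subst h2
        have hh : (List.replicate k a ++ Y).head? = some a := by
          rcases k with _ | k
          · omega
          · rw [List.replicate_succ]; rfl
        exact hX a (by simp [hh]) rfl
    · rcases Nat.eq_zero_or_pos k with rfl | hk'
      · exfalso
        simp only [List.replicate_zero, List.nil_append] at h2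
        have hh : Y.head? = some a := by
          rcases m with _ | m
          · omega
          · rw [← h2, List.replicate_succ]; rfl
        exact hY a (by simp [hh]) rfl
      · obtain ⟨he, hmk, hXY⟩ := ih hm hk' hX hY h2
        exact ⟨he, by omega, hXY⟩

/-- Injectivity of expansion. -/
lemma expand_inj : ∀ {L L' : List (Fin n × ℤ)}, (∀ p ∈ L, p.2 ≠ 0) → (∀ p ∈ L', p.2 ≠ 0) →
    L.Chain' (fun p q => p.1 ≠ q.1) → L'.Chain' (fun p q => p.1 ≠ q.1) →
    expand L = expand L' → L = L' := by
  intro L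
  induction L with
  | nil =>
    intro L' _ hnz' _ _ h
    rcases L' with _ | ⟨q, L'⟩
    · rfl
    · exfalso
      rw [expand_nil, expand_cons, eq_comm, List.append_eq_nil_iff] at h
      have : q.2.natAbs ≠ 0 := by have := hnz' q (by simp); omega
      rw [expandP] at h
      simp [List.replicate_eq_nil_iff, this] at h
  | cons p L ih =>
    intro L' hnz hnz' hch hch' h
    rcases L' with _ | ⟨q, L'⟩
    · exfalso
      rw [expand_nil, expand_cons, List.append_eq_nil_iff] at h
      have : p.2.natAbs ≠ 0 := by have := hnz p (by simp); omega
      rw [expandP] at h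
      simp [List.replicate_eq_nil_iff, this] at h
    · rw [expand_cons, expand_cons] at h
      have hmp : 0 < p.2.natAbs := by have := hnz p (by simp); omega
      have hmq : 0 < q.2.natAbs := by have := hnz' q (by simp); omega
      have hXhead : ∀ c ∈ (expand L).head?, c.1 ≠ p.1 := by
        rcases L with _ | ⟨r, L''⟩
        · intro c hc; simp [expand] at hc
        · intro c hc
          rw [expand_head (hnz r (by simp))] at hc
          cases hc
          exact (List.isChain_cons_cons.1 hch).1.symm
      have hYhead : ∀ c ∈ (expand L').head?, c.1 ≠ q.1 := by
        rcases L' with _ | ⟨r, L''⟩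
        · intro c hc; simp [expand] at hc
        · intro c hc
          rw [expand_head (hnz' r (by simp))] at hc
          cases hc
          exact (List.isChain_cons_cons.1 hch').1.symm
      obtain ⟨heq, hmk, hXY⟩ := rep_eq hmp hmq hXhead hYhead h
      have hfst : p.1 = q.1 := (Prod.ext_iff.1 heq).1
      have hsnd : decide (0 < p.2) = decide (0 < q.2) := (Prod.ext_iff.1 heq).2
      have hsign : (0 < p.2) ↔ (0 < q.2) := by
        constructor <;> intro hh
        · have : decide (0 < q.2) = true := by rw [← hsnd]; simp [hh]
          simpa using this
        · have : decide (0 < p.2) = true := by rw [hsnd]; simp [hh]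
          simpa using this
      have hval : p.2 = q.2 := by
        have h1 := hnz p (by simp)
        have h2 := hnz' q (by simp)
        rcases hsign with ⟨hs1, hs2⟩
        omega
      have hpq : p = q := Prod.ext hfst hval
      subst hpq
      rw [ih (fun r hr => hnz r (List.mem_cons_of_mem _ hr))
        (fun r hr => hnz' r (List.mem_cons_of_mem _ hr)) hch.tail hch'.tail hXY]

end VKB



/-- The Knuth–Bendix normal form in the Vershik group `V_n` is unique: two
normal-form expressions for the same element coincide (same number of factors
and the same pairs `(i_j, μ_j)` throughout). -/
theorem vershik_kb_normal_form_unique (n : ℕ) (u : Vershik n)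
    (L L' : List (Fin n × ℤ))
    (hL : IsKBNormalForm n u L) (hL' : IsKBNormalForm n u L') :
    L = L' := by
  obtain ⟨hnz, hprod, hlen, hkb⟩ := hL
  obtain ⟨hnz', hprod', hlen', hkb'⟩ := hL'
  have hp : VKB.prodOf (VKB.expand L) = u := by rw [VKB.prodOf_expand]; exact hprod
  have hp' : VKB.prodOf (VKB.expand L') = u := by rw [VKB.prodOf_expand]; exact hprod'
  have hlE : (VKB.expand L).length = vLength (VKB.prodOf (VKB.expand L)) := by
    rw [VKB.length_expand, hp]; exact hlen
  have hlE' : (VKB.expand L').length = vLength (VKB.prodOf (VKB.expand L')) := by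
    rw [VKB.length_expand, hp']; exact hlen'
  have hred : VKB.Red (VKB.expand L) := VKB.red_of_geodesic hlE
  have hred' : VKB.Red (VKB.expand L') := VKB.red_of_geodesic hlE'
  have htr : VKB.Tr (VKB.expand L) (VKB.expand L') :=
    VKB.tr_of_prodOf_eq hred hred' (by rw [hp, hp'])
  have hE : VKB.expand L = VKB.expand L' :=
    VKB.lc_tr_eq (VKB.lc_expand hnz hkb) (VKB.lc_expand hnz' hkb') htr
  exact VKB.expand_inj hnz hnz' (VKB.kb_chain_ne hkb) (VKB.kb_chain_ne hkb') hE
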